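/- Let m ≥ 1 and let Φ be a ℂ-linear map on the space of 2^m × 2^m complex matrices (indexed by Fin m → Fin 2). Suppose that for every m-qubit Pauli string W there exist complex coefficients a_{W,V}, indexed by the diagonal Pauli strings V ∈ {𝟙,Z}^{⊗m}, such that Φ(W) = Σ_V a_{W,V} · V·W. Then for every diagonal Pauli string Λ ∈ {𝟙,Z}^{⊗m} and every 2^m × 2^m matrix ρ, Φ(Λ ρ Λ) = Λ Φ(ρ) Λ. -/
import Mathlib


open Matrix

/-- The four Pauli matrices `𝟙, X, Y, Z`. -/
noncomputable def pauli : Fin 4 → Matrix (Fin 2) (Fin 2) ℂ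
  | 0 => !![1, 0; 0, 1]
  | 1 => !![0, 1; 1, 0]
  | 2 => !![0, -Complex.I; Complex.I, 0]
  | 3 => !![1, 0; 0, -1]

/-- The `m`-qubit Pauli string determined by `s : Fin m → Fin 4`: the `m`-fold Kronecker
product of the matrices `pauli (s i)`, with entries `∏ i, (pauli (s i)) (a i) (b i)`. -/
noncomputable def pauliString {m : ℕ} (s : Fin m → Fin 4) :
    Matrix (Fin m → Fin 2) (Fin m → Fin 2) ℂ :=
  Matrix.of fun a b => ∏ i, pauli (s i) (a i) (b i)

/-- The diagonal Pauli string in `{𝟙, Z}^{⊗m}` determined by `t : Fin m → Bool`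
(`Z` where `t` is true, `𝟙` elsewhere). -/
noncomputable def diagPauliString {m : ℕ} (t : Fin m → Bool) :
    Matrix (Fin m → Fin 2) (Fin m → Fin 2) ℂ :=
  pauliString (fun i => if t i then 3 else 0)

noncomputable def cfn : Fin 2 → Fin 2 → Fin 4 → ℂ
  | 0, 0 => ![1/2, 0, 0, 1/2]
  | 1, 1 => ![1/2, 0, 0, -(1/2)]
  | 0, 1 => ![0, 1/2, Complex.I/2, 0]
  | 1, 0 => ![0, 1/2, -(Complex.I/2), 0]

lemma cfn_spec (x y u v : Fin 2) :
    (∑ k : Fin 4, cfn x y k * pauli k u v) = if x = u ∧ y = v then 1 else 0 := by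
  fin_cases x <;> fin_cases y <;> fin_cases u <;> fin_cases v <;>
    simp [cfn, pauli, Fin.sum_univ_four] <;> ring_nf <;>
    simp [Complex.I_sq] <;> ring

lemma pauli_diag_entry (b : Bool) (x : Fin 2) :
    pauli (if b then 3 else 0) x x = if b ∧ x = 1 then -1 else 1 := by
  cases b <;> fin_cases x <;> simp [pauli]

lemma pauli_offdiag_entry (b : Bool) (x y : Fin 2) (h : x ≠ y) :
    pauli (if b then 3 else 0) x y = 0 := by
  cases b <;> fin_cases x <;> fin_cases y <;> simp_all [pauli]

lemma diag_entry {m : ℕ} (t : Fin m → Bool) :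
    diagPauliString t =
      Matrix.diagonal (fun a => ∏ i, (if t i ∧ a i = 1 then (-1 : ℂ) else 1)) := by
  ext a b
  by_cases h : a = b
  · subst h
    simp only [diagPauliString, pauliString, Matrix.of_apply, Matrix.diagonal_apply_eq]
    exact Finset.prod_congr rfl fun i _ => pauli_diag_entry (t i) (a i)
  · rw [Matrix.diagonal_apply_ne _ h]
    obtain ⟨i, hi⟩ : ∃ i, a i ≠ b i := by
      by_contra hc; push_neg at hc; exact h (funext hc)
    exact Finset.prod_eq_zero (Finset.mem_univ i) (pauli_offdiag_entry (t i) _ _ hi)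

lemma pauli_sign (b : Bool) (k : Fin 4) (x y : Fin 2) :
    (if b ∧ x = 1 then (-1 : ℂ) else 1) * pauli k x y * (if b ∧ y = 1 then (-1 : ℂ) else 1)
      = (if b ∧ (k = 1 ∨ k = 2) then (-1 : ℂ) else 1) * pauli k x y := by
  cases b <;> fin_cases k <;> fin_cases x <;> fin_cases y <;> simp [pauli] <;> ring

noncomputable def eps {m : ℕ} (t : Fin m → Bool) (s : Fin m → Fin 4) : ℂ :=
  ∏ i, (if t i ∧ (s i = 1 ∨ s i = 2) then (-1 : ℂ) else 1)

lemma conj_pauli {m : ℕ} (t : Fin m → Bool) (s : Fin m → Fin 4) :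
    diagPauliString t * pauliString s * diagPauliString t = eps t s • pauliString s := by
  rw [diag_entry]
  ext a b
  rw [Matrix.mul_diagonal, Matrix.diagonal_mul]
  simp only [pauliString, Matrix.of_apply, Matrix.smul_apply, smul_eq_mul, eps]
  rw [← Finset.prod_mul_distrib, ← Finset.prod_mul_distrib, ← Finset.prod_mul_distrib]
  exact Finset.prod_congr rfl fun i _ => pauli_sign (t i) (s i) (a i) (b i)

lemma diag_comm {m : ℕ} (t u : Fin m → Bool) :
    diagPauliString t * diagPauliString u = diagPauliString u * diagPauliString t := by
  rw [diag_entry t, diag_entry u, Matrix.diagonal_mul_diagonal, Matrix.diagonal_mul_diagonal]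
  exact congrArg Matrix.diagonal (funext fun a => mul_comm _ _)

lemma std_in_span {m : ℕ} (a b : Fin m → Fin 2) :
    Matrix.single a b (1 : ℂ) =
      ∑ s : Fin m → Fin 4, (∏ i, cfn (a i) (b i) (s i)) • pauliString s := by
  ext u v
  simp only [Matrix.sum_apply, Matrix.smul_apply, pauliString, Matrix.of_apply,
    smul_eq_mul, Matrix.single]
  symm
  rw [Finset.sum_congr rfl (fun s _ =>
    (Finset.prod_mul_distrib (f := fun i => cfn (a i) (b i) (s i))
      (g := fun i => pauli (s i) (u i) (v i))).symm)]
  rw [← Fintype.prod_sum (fun i (k : Fin 4) => cfn (a i) (b i) k * pauli k (u i) (v i))]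
  simp only [cfn_spec]
  by_cases h : a = u ∧ b = v
  · obtain ⟨h1, h2⟩ := h
    subst h1; subst h2
    simp
  · rw [if_neg h]
    have hex : ∃ i, ¬(a i = u i ∧ b i = v i) := by
      by_contra hc
      push_neg at hc
      exact h ⟨funext fun i => (hc i).1, funext fun i => (hc i).2⟩
    obtain ⟨i, hi⟩ := hex
    exact Finset.prod_eq_zero (Finset.mem_univ i) (if_neg hi)

lemma mem_span_pauli {m : ℕ} (ρ : Matrix (Fin m → Fin 2) (Fin m → Fin 2) ℂ) :
    ρ ∈ Submodule.span ℂ (Set.range (pauliString (m := m))) := by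
  rw [Matrix.matrix_eq_sum_single ρ]
  apply Submodule.sum_mem
  intro a _
  apply Submodule.sum_mem
  intro b _
  have : Matrix.single a b (ρ a b) = ρ a b • Matrix.single a b (1 : ℂ) := by
    rw [Matrix.smul_single, smul_eq_mul, mul_one]
  rw [this, std_in_span]
  apply Submodule.smul_mem
  apply Submodule.sum_mem
  intro s _
  exact Submodule.smul_mem _ _ (Submodule.subset_span ⟨s, rfl⟩)

/-- **Covariance.** If a linear map `Φ` on `2^m × 2^m` matrices sends each
Pauli string `W` into the span of `{V·W : V ∈ {𝟙,Z}^{⊗m}}`, then `Φ` is covariant with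
respect to conjugation by every diagonal Pauli string `Λ ∈ {𝟙,Z}^{⊗m}`. -/
theorem covariance_of_diagonal_pauli (m : ℕ) (hm : 1 ≤ m)
    (Φ : Matrix (Fin m → Fin 2) (Fin m → Fin 2) ℂ →ₗ[ℂ]
         Matrix (Fin m → Fin 2) (Fin m → Fin 2) ℂ)
    (hΦ : ∀ s : Fin m → Fin 4, ∃ a : (Fin m → Bool) → ℂ,
      Φ (pauliString s) = ∑ t : Fin m → Bool, a t • (diagPauliString t * pauliString s)) :
    ∀ (t : Fin m → Bool) (ρ : Matrix (Fin m → Fin 2) (Fin m → Fin 2) ℂ),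
      Φ (diagPauliString t * ρ * diagPauliString t)
        = diagPauliString t * Φ ρ * diagPauliString t := by
  intro t ρ
  induction mem_span_pauli ρ using Submodule.span_induction with
  | mem W hW =>
    obtain ⟨s, rfl⟩ := hW
    obtain ⟨a, ha⟩ := hΦ s
    rw [conj_pauli, LinearMap.map_smul, ha, Matrix.mul_sum, Matrix.sum_mul]
    rw [Finset.smul_sum]
    apply Finset.sum_congr rfl
    intro u _
    rw [Matrix.mul_smul, Matrix.smul_mul]
    rw [smul_comm]
    congr 1
    symm
    calc diagPauliString t * (diagPauliString u * pauliString s) * diagPauliString t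
        = diagPauliString u * (diagPauliString t * pauliString s * diagPauliString t) := by
          rw [← mul_assoc, ← mul_assoc, diag_comm t u, mul_assoc, mul_assoc,
            ← mul_assoc (diagPauliString t), ← mul_assoc]
      _ = diagPauliString u * (eps t s • pauliString s) := by rw [conj_pauli]
      _ = eps t s • (diagPauliString u * pauliString s) := by rw [Matrix.mul_smul]
  | zero => simp
  | add x y hx hy ihx ihy =>
    rw [mul_add, add_mul, LinearMap.map_add, LinearMap.map_add, ihx, ihy, mul_add, add_mul]
  | smul c x hx ihx =>
    rw [Matrix.mul_smul, Matrix.smul_mul, LinearMap.map_smul, LinearMap.map_smul, ihx, Matrix.mul_smul,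
      Matrix.smul_mul]
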